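/- Let λ > 0 and let f ∈ L²(ℝ₊, x^{2λ}dx). Suppose the nontangential maximal function x ↦ sup_{|y−x|<t}|P_t^{[λ]}f(y)| belongs to L^p(ℝ₊, x^{2λ}dx) for some p ∈ ((2λ+1)/(2λ+2), 1]. Then P_t^{[λ]}f(x) → 0 as t → ∞, uniformly; more precisely, |P_t^{[λ]}f(x)|^p ≤ m_λ(I(x,t))^{−1} ‖sup_{|·−y|<t}|P_t f(y)|‖_{L^p}^p for all x, t. -/

import Mathlib

noncomputable section
open MeasureTheory Set

/-- The Bessel Poisson kernel `P_t^{[λ]}(x,y)`. -/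
def besselP (lam t x y : ℝ) : ℝ :=
  (2 * lam * t / Real.pi) * ∫ θ in Ioo (0 : ℝ) Real.pi,
    (Real.sin θ) ^ (2 * lam - 1) / (x ^ 2 + y ^ 2 + t ^ 2 - 2 * x * y * Real.cos θ) ^ (lam + 1)

/-- The Bessel Poisson integral `P_t^{[λ]}f(x)`. -/
def besselPop (lam : ℝ) (f : ℝ → ℝ) (t x : ℝ) : ℝ :=
  ∫ y in Ioi (0 : ℝ), besselP lam t x y * f y * y ^ (2 * lam)

/-- The measure `x^{2λ} dx` on `(0,∞)`. -/
def muL (lam : ℝ) : Measure ℝ :=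
  (volume.restrict (Ioi (0 : ℝ))).withDensity fun x => ENNReal.ofReal (x ^ (2 * lam))

/-- Bessel measure of the interval `I(x,r) = (x-r, x+r) ∩ (0,∞)`. -/
def mLambda (lam x r : ℝ) : ℝ :=
  ∫ u in Ioo (x - r) (x + r) ∩ Ioi (0 : ℝ), u ^ (2 * lam)

/-- If the nontangential maximal function `N` of `P_t^{[λ]}f` lies in
`L^p(ℝ₊, x^{2λ}dx)` for some `p ∈ ((2λ+1)/(2λ+2), 1]`, then
`|P_t^{[λ]}f(x)|^p ≤ m_λ(I(x,t))⁻¹ ‖N‖_{L^p}^p` for all `x, t > 0`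
(in particular `P_t^{[λ]}f → 0` as `t → ∞`). -/
theorem stmt16 (lam p : ℝ) (hlam : 0 < lam)
    (hp1 : (2 * lam + 1) / (2 * lam + 2) < p) (hp2 : p ≤ 1)
    (f : ℝ → ℝ) (hf : MemLp f 2 (muL lam))
    (N : ℝ → ℝ)
    (hN : ∀ x y t : ℝ, 0 < t → |y - x| < t → |besselPop lam f t y| ≤ N x)
    (hNint : IntegrableOn (fun z => (N z) ^ p * z ^ (2 * lam)) (Ioi (0 : ℝ))) :
    ∀ x t : ℝ, 0 < x → 0 < t →
      |besselPop lam f t x| ^ p * mLambda lam x t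
        ≤ ∫ z in Ioi (0 : ℝ), (N z) ^ p * z ^ (2 * lam) := by
  intro x t hx ht
  have hp0 : 0 < p := lt_trans (div_pos (by linarith) (by linarith)) hp1
  set S : Set ℝ := Ioo (x - t) (x + t) ∩ Ioi (0 : ℝ) with hS
  have hSsub : S ⊆ Ioi (0 : ℝ) := inter_subset_right
  have hSmeas : MeasurableSet S := (measurableSet_Ioo).inter measurableSet_Ioi
  have hNnn : ∀ u : ℝ, 0 ≤ N u := by
    intro u
    exact le_trans (abs_nonneg _) (hN u u 1 one_pos (by simp))
  -- nonnegativity of the RHS integrand on Ioi 0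
  have hgnn : ∀ u : ℝ, u ∈ Ioi (0 : ℝ) → 0 ≤ (N u) ^ p * u ^ (2 * lam) := by
    intro u hu
    exact mul_nonneg (Real.rpow_nonneg (hNnn u) p) (Real.rpow_nonneg (le_of_lt hu) _)
  set C : ℝ := |besselPop lam f t x| ^ p with hC
  have hCnn : 0 ≤ C := Real.rpow_nonneg (abs_nonneg _) p
  have step1 : C * mLambda lam x t = ∫ u in S, C * u ^ (2 * lam) := by
    rw [mLambda, ← MeasureTheory.integral_const_mul]
  have hbound : ∀ u : ℝ, u ∈ S → C * u ^ (2 * lam) ≤ (N u) ^ p * u ^ (2 * lam) := by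
    intro u hu
    apply mul_le_mul_of_nonneg_right _ (Real.rpow_nonneg (le_of_lt hu.2) _)
    apply Real.rpow_le_rpow (abs_nonneg _) _ (le_of_lt hp0)
    have h1 : |x - u| < t := by
      rcases hu.1 with ⟨h1, h2⟩
      rw [abs_lt]; constructor <;> linarith
    exact hN u x t ht h1
  have step2 : (∫ u in S, C * u ^ (2 * lam)) ≤ ∫ u in S, (N u) ^ p * u ^ (2 * lam) := by
    apply integral_mono_of_nonneg
    · filter_upwards [ae_restrict_mem hSmeas] with u hu
      exact mul_nonneg hCnn (Real.rpow_nonneg (le_of_lt hu.2) _)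
    · exact hNint.mono_set hSsub
    · filter_upwards [ae_restrict_mem hSmeas] with u hu
      exact hbound u hu
  have step3 : (∫ u in S, (N u) ^ p * u ^ (2 * lam))
      ≤ ∫ z in Ioi (0 : ℝ), (N z) ^ p * z ^ (2 * lam) := by
    apply setIntegral_mono_set hNint
    · filter_upwards [ae_restrict_mem measurableSet_Ioi] with u hu
      exact hgnn u hu
    · exact HasSubset.Subset.eventuallyLE hSsub
  calc |besselPop lam f t x| ^ p * mLambda lam x t
      = ∫ u in S, C * u ^ (2 * lam) := step1
    _ ≤ ∫ u in S, (N u) ^ p * u ^ (2 * lam) := step2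
    _ ≤ ∫ z in Ioi (0 : ℝ), (N z) ^ p * z ^ (2 * lam) := step3
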